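/- For every t > 0, the spatial derivative of c̄ exists at x = 0 and at x = L and satisfies the mixed Neumann boundary conditions ∂c̄/∂x (0,t) = −β (constant inflow flux at the solid–electrolyte interface) and ∂c̄/∂x (L,t) = 0 (no flux at the current collector interface). -/

import Mathlib

open Real

/-- For every `t > 0`, the spatial derivative of the analytical solid-phase
concentration exists at `x = 0` and `x = L` and satisfies the mixed Neumann
boundary conditions `∂c̄/∂x(0,t) = −β` and `∂c̄/∂x(L,t) = 0`. -/
theorem stmt_8 (L D β cI : ℝ) (hL : 0 < L) (hD : 0 < D)
    (cbar : ℝ × ℝ → ℝ)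
    (hcbar : ∀ x t : ℝ, cbar (x, t) =
      cI - β * x * (1 - x / (2 * L)) + β * D * t / L +
        2 * β * L * (1 / 6 -
          ∑' n : ℕ, (1 / (((n : ℝ) + 1) ^ 2 * Real.pi ^ 2)) *
            Real.cos (((n : ℝ) + 1) * Real.pi * x / L) *
            Real.exp (-((((n : ℝ) + 1) * Real.pi / L) ^ 2 * D * t))) ) :
    ∀ t : ℝ, 0 < t →
      HasDerivAt (fun y : ℝ => cbar (y, t)) (-β) 0 ∧
      HasDerivAt (fun y : ℝ => cbar (y, t)) 0 L := by
  intro t ht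
  have hπ := Real.pi_pos
  set c : ℝ := (Real.pi / L) ^ 2 * D * t with hc
  have hcpos : 0 < c := by positivity
  set g : ℕ → ℝ → ℝ := fun n y =>
    (1 / (((n : ℝ) + 1) ^ 2 * Real.pi ^ 2)) *
      Real.cos (((n : ℝ) + 1) * Real.pi * y / L) *
      Real.exp (-((((n : ℝ) + 1) * Real.pi / L) ^ 2 * D * t)) with hgdef
  set g' : ℕ → ℝ → ℝ := fun n y =>
    (1 / (((n : ℝ) + 1) ^ 2 * Real.pi ^ 2)) *
      (-Real.sin (((n : ℝ) + 1) * Real.pi * y / L) * (((n : ℝ) + 1) * Real.pi / L)) *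
      Real.exp (-((((n : ℝ) + 1) * Real.pi / L) ^ 2 * D * t)) with hg'def
  have hexp : ∀ n : ℕ,
      Real.exp (-((((n : ℝ) + 1) * Real.pi / L) ^ 2 * D * t)) ≤ Real.exp (-c) ^ (n + 1) := by
    intro n
    rw [← Real.exp_nat_mul]
    apply Real.exp_le_exp.2
    have hn1 : (1 : ℝ) ≤ (n : ℝ) + 1 := by have := Nat.cast_nonneg (α := ℝ) n; linarith
    have key : c * (n + 1) ≤ (((n : ℝ) + 1) * Real.pi / L) ^ 2 * D * t := by
      have h2 : (((n : ℝ) + 1) * Real.pi / L) ^ 2 = ((n : ℝ) + 1) ^ 2 * (Real.pi / L) ^ 2 := by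
        ring
      have h3 : ((n : ℝ) + 1) ≤ ((n : ℝ) + 1) ^ 2 := by nlinarith
      have h4 : (Real.pi / L) ^ 2 * ((n : ℝ) + 1) ≤ (((n : ℝ) + 1) * Real.pi / L) ^ 2 := by
        rw [h2]; nlinarith [sq_nonneg (Real.pi / L)]
      calc c * (n + 1) = (Real.pi / L) ^ 2 * ((n : ℝ) + 1) * (D * t) := by rw [hc]; ring
        _ ≤ (((n : ℝ) + 1) * Real.pi / L) ^ 2 * (D * t) :=
            mul_le_mul_of_nonneg_right h4 (by positivity)
        _ = (((n : ℝ) + 1) * Real.pi / L) ^ 2 * D * t := by ring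
    push_cast
    linarith
  have hr1 : Real.exp (-c) < 1 := Real.exp_lt_one_iff.2 (by linarith)
  have hr0 : (0 : ℝ) ≤ Real.exp (-c) := (Real.exp_pos _).le
  have hgeo : Summable fun n : ℕ => Real.exp (-c) ^ (n + 1) := by
    have := summable_geometric_of_lt_one hr0 hr1
    simpa [pow_succ, mul_comm] using this.mul_right (Real.exp (-c))
  set u : ℕ → ℝ := fun n => (1 / (Real.pi * L)) * Real.exp (-c) ^ (n + 1) with hu
  have hsumu : Summable u := hgeo.mul_left _
  have hderiv : ∀ n y, HasDerivAt (g n) (g' n y) y := by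
    intro n y
    have h1 : HasDerivAt (fun y : ℝ => ((n : ℝ) + 1) * Real.pi / L * y)
        (((n : ℝ) + 1) * Real.pi / L) y := by
      simpa using (hasDerivAt_id y).const_mul (((n : ℝ) + 1) * Real.pi / L)
    have key := (h1.cos.const_mul (1 / (((n : ℝ) + 1) ^ 2 * Real.pi ^ 2))).mul_const
      (Real.exp (-((((n : ℝ) + 1) * Real.pi / L) ^ 2 * D * t)))
    have harg : ∀ z : ℝ, ((n : ℝ) + 1) * Real.pi / L * z = ((n : ℝ) + 1) * Real.pi * z / L :=
      fun z => by ring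
    have hfun : g n = fun z : ℝ => 1 / (((n : ℝ) + 1) ^ 2 * Real.pi ^ 2) *
        Real.cos (((n : ℝ) + 1) * Real.pi / L * z) *
        Real.exp (-((((n : ℝ) + 1) * Real.pi / L) ^ 2 * D * t)) := by
      funext z; simp only [hgdef, harg z]
    have hval : g' n y = 1 / (((n : ℝ) + 1) ^ 2 * Real.pi ^ 2) *
        (-Real.sin (((n : ℝ) + 1) * Real.pi / L * y) * (((n : ℝ) + 1) * Real.pi / L)) *
        Real.exp (-((((n : ℝ) + 1) * Real.pi / L) ^ 2 * D * t)) := by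
      simp only [hg'def, harg y]
    rw [hfun, hval]
    exact key
  have hbound : ∀ n y, ‖g' n y‖ ≤ u n := by
    intro n y
    have hn1 : (1 : ℝ) ≤ (n : ℝ) + 1 := by have := Nat.cast_nonneg (α := ℝ) n; linarith
    rw [hg'def, hu]
    show |_ * _ * _| ≤ _
    rw [abs_mul, abs_mul]
    have e1 : |1 / (((n : ℝ) + 1) ^ 2 * Real.pi ^ 2)| = 1 / (((n : ℝ) + 1) ^ 2 * Real.pi ^ 2) :=
      abs_of_nonneg (by positivity)
    have e2 : |(-Real.sin (((n : ℝ) + 1) * Real.pi * y / L) * (((n : ℝ) + 1) * Real.pi / L))|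
        ≤ ((n : ℝ) + 1) * Real.pi / L := by
      rw [abs_mul, abs_neg, abs_of_nonneg (show (0:ℝ) ≤ ((n : ℝ) + 1) * Real.pi / L by positivity)]
      have := Real.abs_sin_le_one (((n : ℝ) + 1) * Real.pi * y / L)
      nlinarith [abs_nonneg (Real.sin (((n : ℝ) + 1) * Real.pi * y / L)),
        show (0:ℝ) < ((n : ℝ) + 1) * Real.pi / L by positivity]
    have e3 : |Real.exp (-((((n : ℝ) + 1) * Real.pi / L) ^ 2 * D * t))|
        ≤ Real.exp (-c) ^ (n + 1) := by
      rw [abs_of_nonneg (Real.exp_pos _).le]; exact hexp n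
    calc |1 / (((n : ℝ) + 1) ^ 2 * Real.pi ^ 2)| *
          |(-Real.sin (((n : ℝ) + 1) * Real.pi * y / L) * (((n : ℝ) + 1) * Real.pi / L))| *
          |Real.exp (-((((n : ℝ) + 1) * Real.pi / L) ^ 2 * D * t))|
        ≤ (1 / (((n : ℝ) + 1) ^ 2 * Real.pi ^ 2)) * (((n : ℝ) + 1) * Real.pi / L) *
            Real.exp (-c) ^ (n + 1) := by
          rw [e1]
          apply mul_le_mul _ e3 (abs_nonneg _) (by positivity)
          exact mul_le_mul_of_nonneg_left e2 (by positivity)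
      _ = (1 / (((n : ℝ) + 1) * (Real.pi * L))) * Real.exp (-c) ^ (n + 1) := by
          field_simp
      _ ≤ (1 / (Real.pi * L)) * Real.exp (-c) ^ (n + 1) := by
          apply mul_le_mul_of_nonneg_right _ (by positivity)
          apply div_le_div_of_nonneg_left (by norm_num) (by positivity)
          nlinarith [show (0:ℝ) < Real.pi * L by positivity]
  have hg0 : Summable fun n => g n 0 := by
    apply Summable.of_norm
    apply Summable.of_nonneg_of_le (fun n => norm_nonneg _)
      (f := fun n : ℕ => (1 / Real.pi ^ 2) * Real.exp (-c) ^ (n + 1)) _ (hgeo.mul_left _)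
    intro n
    have hn1 : (1 : ℝ) ≤ (n : ℝ) + 1 := by have := Nat.cast_nonneg (α := ℝ) n; linarith
    rw [hgdef]
    show |_ * _ * _| ≤ _
    rw [abs_mul, abs_mul]
    have e1 : |1 / (((n : ℝ) + 1) ^ 2 * Real.pi ^ 2)| ≤ 1 / Real.pi ^ 2 := by
      rw [abs_of_nonneg (by positivity)]
      apply div_le_div_of_nonneg_left (by norm_num) (by positivity)
      have h1 : (1 : ℝ) ≤ ((n : ℝ) + 1) ^ 2 := by nlinarith
      nlinarith [sq_nonneg Real.pi]
    have e2 : |Real.cos (((n : ℝ) + 1) * Real.pi * 0 / L)| ≤ 1 := Real.abs_cos_le_one _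
    have e3 : |Real.exp (-((((n : ℝ) + 1) * Real.pi / L) ^ 2 * D * t))|
        ≤ Real.exp (-c) ^ (n + 1) := by
      rw [abs_of_nonneg (Real.exp_pos _).le]; exact hexp n
    calc |1 / (((n : ℝ) + 1) ^ 2 * Real.pi ^ 2)| * |Real.cos (((n : ℝ) + 1) * Real.pi * 0 / L)| *
          |Real.exp (-((((n : ℝ) + 1) * Real.pi / L) ^ 2 * D * t))|
        ≤ (1 / Real.pi ^ 2 * 1) * Real.exp (-c) ^ (n + 1) := by
          apply mul_le_mul _ e3 (abs_nonneg _) (by positivity)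
          exact mul_le_mul e1 e2 (abs_nonneg _) (by positivity)
      _ = (1 / Real.pi ^ 2) * Real.exp (-c) ^ (n + 1) := by ring
  have hS0 : HasDerivAt (fun y : ℝ => ∑' n : ℕ, g n y) 0 0 := by
    have h := hasDerivAt_tsum hsumu hderiv hbound hg0 0
    have hz : (∑' n : ℕ, g' n 0) = 0 := by
      have : (fun n : ℕ => g' n 0) = fun _ => (0 : ℝ) := by
        funext n; simp only [hg'def]; simp
      rw [this, tsum_zero]
    rwa [hz] at h
  have hSL : HasDerivAt (fun y : ℝ => ∑' n : ℕ, g n y) 0 L := by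
    have h := hasDerivAt_tsum hsumu hderiv hbound hg0 L
    have hz : (∑' n : ℕ, g' n L) = 0 := by
      have : (fun n : ℕ => g' n L) = fun _ => (0 : ℝ) := by
        funext n
        simp only [hg'def]
        have harg : ((n : ℝ) + 1) * Real.pi * L / L = ((n + 1 : ℕ) : ℝ) * Real.pi := by
          push_cast; field_simp
        rw [harg, Real.sin_nat_mul_pi]
        ring
      rw [this, tsum_zero]
    rwa [hz] at h
  -- general step: derivative of the full function at a point p with series derivative 0
  have main : ∀ (p : ℝ), HasDerivAt (fun y : ℝ => ∑' n : ℕ, g n y) 0 p →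
      HasDerivAt (fun y : ℝ => cbar (y, t)) (-β + β * p / L) p := by
    intro p hS
    have hfun : (fun y : ℝ => cbar (y, t)) =
        fun y : ℝ => cI - β * y * (1 - y / (2 * L)) + β * D * t / L +
          2 * β * L * (1 / 6 - ∑' n : ℕ, g n y) := by
      funext y; rw [hcbar y t]
    rw [hfun]
    have hp1 : HasDerivAt (fun y : ℝ => cI - β * y * (1 - y / (2 * L)) + β * D * t / L)
        (-β + β * p / L) p := by
      have h1 : HasDerivAt (fun y : ℝ => β / (2 * L) * y ^ 2 - β * y)
          (β / (2 * L) * (2 * p) - β) p := by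
        have h := ((hasDerivAt_pow 2 p).const_mul (β / (2 * L))).sub
          (by simpa using (hasDerivAt_id p).const_mul β)
        convert h using 1
        · rfl
        · rfl
        · rfl
        norm_num
      have h2 := (h1.add_const (β * D * t / L)).const_add cI
      have heq : (fun y : ℝ => cI + (β / (2 * L) * y ^ 2 - β * y + β * D * t / L)) =
          fun y : ℝ => cI - β * y * (1 - y / (2 * L)) + β * D * t / L := by
        funext y; field_simp; ring
      rw [heq] at h2
      convert h2 using 1
      · rfl
      · rfl
      ring
    have hp2 : HasDerivAt (fun y : ℝ => 2 * β * L * (1 / 6 - ∑' n : ℕ, g n y))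
        (2 * β * L * -0) p := ((hS.const_sub (1 / 6)).const_mul (2 * β * L))
    have := hp1.add hp2
    convert this using 1
    · rfl
    · rfl
    · rfl
    ring
  constructor
  · have h := main 0 hS0
    simpa using h
  · have h := main L hSL
    have : -β + β * L / L = 0 := by field_simp; ring
    rwa [this] at h
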